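/- Let I ⊆ ℝ be an interval, let κ, τ : I → ℝ be nowhere-vanishing functions with κ twice differentiable and τ differentiable, and let T, N, B : I → ℝ³ be differentiable maps satisfying the Frenet equations T' = κN, N' = τB, B' = τN on I (so that T is three times differentiable). Then T satisfies the third-order linear vector differential equation (1/(τκ))T''' + [(2/τ)(1/κ)' + (1/τ)'(1/κ)]T'' + [(1/τ)(1/κ)'' + (1/τ)'(1/κ)' − τ/κ]T' = 0 on I. -/

import Mathlib

/-- If `T, N, B : I → ℝ³` satisfy the pseudo-Galilean Frenet equations
`T' = κ N`, `N' = τ B`, `B' = τ N` with `κ, τ` nowhere vanishing, `κ` twice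
differentiable and `τ` differentiable, then `T` satisfies the third-order linear
vector differential equation
`(1/(τκ)) T''' + [(2/τ)(1/κ)' + (1/τ)'(1/κ)] T'' + [(1/τ)(1/κ)'' + (1/τ)'(1/κ)' − τ/κ] T' = 0`. -/
theorem stmt_3
    (I : Set ℝ) (hIopen : IsOpen I) (hIconv : Convex ℝ I)
    (κ τ : ℝ → ℝ)
    (hκ0 : ∀ s ∈ I, κ s ≠ 0) (hτ0 : ∀ s ∈ I, τ s ≠ 0)
    (hκ1 : ∀ s ∈ I, DifferentiableAt ℝ κ s)
    (hκ2 : ∀ s ∈ I, DifferentiableAt ℝ (deriv κ) s)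
    (hτ1 : ∀ s ∈ I, DifferentiableAt ℝ τ s)
    (T N B : ℝ → EuclideanSpace ℝ (Fin 3))
    (hT : ∀ s ∈ I, HasDerivAt T (κ s • N s) s)
    (hN : ∀ s ∈ I, HasDerivAt N (τ s • B s) s)
    (hB : ∀ s ∈ I, HasDerivAt B (τ s • N s) s) :
    ∀ s ∈ I,
      (1 / (τ s * κ s)) • deriv (deriv (deriv T)) s +
      ((2 / τ s) * deriv (fun x => 1 / κ x) s +
          deriv (fun x => 1 / τ x) s * (1 / κ s)) • deriv (deriv T) s +
      ((1 / τ s) * deriv (deriv (fun x => 1 / κ x)) s +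
          deriv (fun x => 1 / τ x) s * deriv (fun x => 1 / κ x) s - τ s / κ s) •
        deriv T s = 0 := by
  intro s hs
  -- first derivative of T
  have hdT : ∀ x ∈ I, deriv T x = κ x • N x := fun x hx => (hT x hx).deriv
  -- second derivative of T
  have hD2 : ∀ x ∈ I, HasDerivAt (fun y => κ y • N y)
      ((κ x * τ x) • B x + deriv κ x • N x) x := by
    intro x hx
    have := ((hκ1 x hx).hasDerivAt).smul (hN x hx)
    simp only [smul_smul] at this
    exact this
  have hddT : ∀ x ∈ I, deriv (deriv T) x = (κ x * τ x) • B x + deriv κ x • N x := by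
    intro x hx
    have heq : deriv T =ᶠ[nhds x] fun y => κ y • N y := by
      filter_upwards [hIopen.mem_nhds hx] with y hy using hdT y hy
    rw [heq.deriv_eq]
    exact (hD2 x hx).deriv
  -- third derivative of T
  have hD3 : HasDerivAt (fun y => (κ y * τ y) • B y + deriv κ y • N y)
      (((κ s * τ s) • (τ s • N s) + (deriv κ s * τ s + κ s * deriv τ s) • B s) +
        (deriv κ s • (τ s • B s) + deriv (deriv κ) s • N s)) s := by
    exact ((((hκ1 s hs).hasDerivAt).mul ((hτ1 s hs).hasDerivAt)).smul (hB s hs)).add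
      (((hκ2 s hs).hasDerivAt).smul (hN s hs))
  have hdddT : deriv (deriv (deriv T)) s =
      ((κ s * τ s) • (τ s • N s) + (deriv κ s * τ s + κ s * deriv τ s) • B s) +
        (deriv κ s • (τ s • B s) + deriv (deriv κ) s • N s) := by
    have heq : deriv (deriv T) =ᶠ[nhds s] fun y => (κ y * τ y) • B y + deriv κ y • N y := by
      filter_upwards [hIopen.mem_nhds hs] with y hy using hddT y hy
    rw [heq.deriv_eq]
    exact hD3.deriv
  -- derivatives of 1/κ
  have hκinv : ∀ x ∈ I, HasDerivAt (fun y => 1 / κ y) (-deriv κ x / κ x ^ 2) x := by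
    intro x hx
    have h := ((hκ1 x hx).hasDerivAt).inv (hκ0 x hx)
    simp only [one_div]
    exact h
  have hdκinv : ∀ x ∈ I, deriv (fun y => 1 / κ y) x = -deriv κ x / κ x ^ 2 :=
    fun x hx => (hκinv x hx).deriv
  have hκ2pow : HasDerivAt (fun y => κ y ^ 2) (2 * κ s ^ 1 * deriv κ s) s := by
    have h := ((hκ1 s hs).hasDerivAt).pow 2
    simp at h ⊢
    exact h
  have hD2inv : HasDerivAt (fun y => -deriv κ y / κ y ^ 2)
      ((-deriv (deriv κ) s * κ s ^ 2 - (-deriv κ s) * (2 * κ s ^ 1 * deriv κ s)) / (κ s ^ 2) ^ 2)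
      s := by
    exact (((hκ2 s hs).hasDerivAt).neg).div hκ2pow (pow_ne_zero 2 (hκ0 s hs))
  have hddκinv : deriv (deriv (fun y => 1 / κ y)) s =
      (-deriv (deriv κ) s * κ s ^ 2 - (-deriv κ s) * (2 * κ s ^ 1 * deriv κ s)) / (κ s ^ 2) ^ 2 := by
    have heq : deriv (fun y => 1 / κ y) =ᶠ[nhds s] fun y => -deriv κ y / κ y ^ 2 := by
      filter_upwards [hIopen.mem_nhds hs] with y hy using hdκinv y hy
    rw [heq.deriv_eq]
    exact hD2inv.deriv
  -- derivative of 1/τ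
  have hdτinv : deriv (fun y => 1 / τ y) s = -deriv τ s / τ s ^ 2 := by
    have := ((hτ1 s hs).hasDerivAt).inv (hτ0 s hs)
    simp only [one_div]
    exact this.deriv
  rw [hdT s hs, hddT s hs, hdddT, hdκinv s hs, hdτinv, hddκinv]
  have hk := hκ0 s hs
  have ht := hτ0 s hs
  match_scalars <;> field_simp <;> ring
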